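/- Let ⊥ be symmetric and let Fᵉ, Gᵉ, Lᵉ : X → Y be even functions vanishing at 0 with ‖Fᵉ(x+y) + Gᵉ(x−y) − Lᵉ(x) − Lᵉ(y)‖ ≤ 2ε for all x ⊥ y, where 0 ⊥ x for all x. Then ‖(Fᵉ(x+y) − Fᵉ(x) − Fᵉ(y)) + (Gᵉ(x−y) − Gᵉ(x) − Gᵉ(y))‖ ≤ 6ε for all x ⊥ y. -/
import Mathlib


/-- Joint quasi-additivity estimate for the even parts. -/
theorem stmt8 {X Y : Type*} [AddCommGroup X] [Module ℝ X] [NormedAddCommGroup Y]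
    (perp : X → X → Prop)
    (hsymm : ∀ x y, perp x y → perp y x)
    (hzero : ∀ x, perp 0 x)
    (hhom : ∀ x y, perp x y → ∀ α β : ℝ, perp (α • x) (β • y))
    (Fe Ge Le : X → Y) (ε : ℝ) (hε : 0 ≤ ε)
    (hFeven : ∀ x, Fe (-x) = Fe x) (hGeven : ∀ x, Ge (-x) = Ge x)
    (hLeven : ∀ x, Le (-x) = Le x)
    (hFe0 : Fe 0 = 0) (hGe0 : Ge 0 = 0) (hLe0 : Le 0 = 0)
    (hineq : ∀ x y, perp x y → ‖Fe (x + y) + Ge (x - y) - Le x - Le y‖ ≤ 2 * ε) :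
    ∀ x y, perp x y →
      ‖(Fe (x + y) - Fe x - Fe y) + (Ge (x - y) - Ge x - Ge y)‖ ≤ 6 * ε := by
  intro x y h
  have h1 := hineq x y h
  have h2 := hineq x 0 (hsymm _ _ (hzero x))
  have h3 := hineq y 0 (hsymm _ _ (hzero y))
  simp [hLe0] at h2 h3
  have key : (Fe (x + y) - Fe x - Fe y) + (Ge (x - y) - Ge x - Ge y) =
      (Fe (x + y) + Ge (x - y) - Le x - Le y) - (Fe x + Ge x - Le x) - (Fe y + Ge y - Le y) := by
    abel
  rw [key]
  calc ‖(Fe (x + y) + Ge (x - y) - Le x - Le y) - (Fe x + Ge x - Le x) - (Fe y + Ge y - Le y)‖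
      ≤ ‖(Fe (x + y) + Ge (x - y) - Le x - Le y) - (Fe x + Ge x - Le x)‖ + ‖Fe y + Ge y - Le y‖ :=
        norm_sub_le _ _
    _ ≤ ‖Fe (x + y) + Ge (x - y) - Le x - Le y‖ + ‖Fe x + Ge x - Le x‖ + ‖Fe y + Ge y - Le y‖ := by
        gcongr; exact norm_sub_le _ _
    _ ≤ 6 * ε := by linarith
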